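/- Let 0 < p ≤ q ≤ 1, let (M, d) be a finite q-metric space, and let N ⊆ M with |M \ N| = 1. Then the map r: M → N fixing N and sending the unique point z ∈ M \ N to a nearest point a ∈ N (d(z, a) = d(z, N)) is 2^{1/q}-Lipschitz; in particular, N is a 2^{1/q}-Lipschitz retract of M. -/
import Mathlib


/-- in a finite `q`-metric space `M`, if `M \ N = {z}` then the
nearest-point retraction `r : M → N` (fixing `N`, sending `z` to a nearest
point `a ∈ N`) is `2^{1/q}`-Lipschitz; hence `N` is a `2^{1/q}`-Lipschitz
retract of `M`. -/
theorem stmt_9 (p q : ℝ) (hp0 : 0 < p) (hpq : p ≤ q) (hq1 : q ≤ 1)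
    {M : Type*} [Fintype M] (d : M → M → ℝ)
    (hsym : ∀ u v, d u v = d v u) (hdiag : ∀ u, d u u = 0)
    (hpos : ∀ u v, u ≠ v → 0 < d u v)
    (htri : ∀ u v w, d u w ^ q ≤ d u v ^ q + d v w ^ q)
    (N : Set M) (z : M) (hN : ∀ x, x ∈ N ↔ x ≠ z)
    (a : M) (ha : a ∈ N) (hamin : ∀ x ∈ N, d z a ≤ d z x)
    (r : M → M) (hrN : ∀ x ∈ N, r x = x) (hrz : r z = a) :
    ∀ u v, d (r u) (r v) ≤ (2 : ℝ) ^ (1 / q) * d u v := by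
  have hq0 : 0 < q := hp0.trans_le hpq
  have hdnn : ∀ u v, 0 ≤ d u v := by
    intro u v
    rcases eq_or_ne u v with h | h
    · rw [h, hdiag]
    · exact (hpos u v h).le
  have hc1 : (1 : ℝ) ≤ (2 : ℝ) ^ (1 / q) :=
    Real.one_le_rpow one_le_two (by positivity)
  -- key case : u = z, v ∈ N
  have key : ∀ v ∈ N, d a v ≤ (2 : ℝ) ^ (1 / q) * d z v := by
    intro v hv
    have h1 : d a v ^ q ≤ 2 * d z v ^ q := by
      calc d a v ^ q ≤ d a z ^ q + d z v ^ q := htri a z v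
        _ ≤ d z v ^ q + d z v ^ q := by
            have : d a z ≤ d z v := by rw [hsym a z]; exact hamin v hv
            have := Real.rpow_le_rpow (hdnn a z) this hq0.le
            linarith
        _ = 2 * d z v ^ q := by ring
    have h2 : 2 * d z v ^ q = ((2 : ℝ) ^ (1 / q) * d z v) ^ q := by
      rw [Real.mul_rpow (by positivity) (hdnn z v), ← Real.rpow_mul
        (by norm_num : (0:ℝ) ≤ 2), one_div_mul_cancel hq0.ne', Real.rpow_one]
    rw [h2] at h1
    exact (Real.rpow_le_rpow_iff (hdnn a v) (mul_nonneg (by positivity) (hdnn z v)) hq0).mp h1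
  intro u v
  rcases eq_or_ne u z with hu | hu <;> rcases eq_or_ne v z with hv | hv
  · rw [hu, hv, hdiag, hdiag, mul_zero]
  · have hvN : v ∈ N := (hN v).mpr hv
    rw [hu, hrz, hrN v hvN]
    exact key v hvN
  · have huN : u ∈ N := (hN u).mpr hu
    rw [hv, hrz, hrN u huN, hsym u a, hsym u z]
    exact key u huN
  · rw [hrN u ((hN u).mpr hu), hrN v ((hN v).mpr hv)]
    nlinarith [hdnn u v, hc1]
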